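/- In the Differential Pricing Mechanism, for every agent i, every v_i ∈ ℝ₊, and every v_{−i} ∈ ℝ₊^{n−1}: (v_i − λ_i)·x_i(v_i) ≥ 0, where λ_i = p_i(v_i)/x_i(v_i) when x_i(v_i) ≠ 0. Equivalently, v_i·x_i(v_i) − p_i(v_i) ≥ 0, where p_i(v_i) = v_i·x_i(v_i) − ∫_{v̂}^{v_i} x_i(z, v_{−i}) dz and v̂ is a zero-crossing point of the monotone function z ↦ x_i(z, v_{−i}). -/
import Mathlib


open Finset

noncomputable def sortedVal (n : ℕ) (v : Fin n → ℝ) (σ : Equiv.Perm (Fin n)) (m : ℕ) : ℝ :=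
  if h : m < n then v (σ ⟨m, h⟩) else 0

noncomputable def SB (n : ℕ) (B : Fin n → ℝ) (σ : Equiv.Perm (Fin n)) (k : ℕ) : ℝ :=
  ∑ j : Fin n, if (j : ℕ) < k then B (σ j) else 0

noncomputable def SG (n : ℕ) (Γ : Fin n → ℝ) (σ : Equiv.Perm (Fin n)) (k : ℕ) : ℝ :=
  ∑ j : Fin n, if k ≤ (j : ℕ) then Γ (σ j) else 0

def IsPartitionPoint (n : ℕ) (v B Γ : Fin n → ℝ) (σ : Equiv.Perm (Fin n)) (k : ℕ) : Prop :=
  1 ≤ k ∧ k ≤ n ∧ SB n B σ k ≤ sortedVal n v σ (k-1) * SG n Γ σ k ∧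
    ∀ l, 1 ≤ l → l ≤ n → SB n B σ l ≤ sortedVal n v σ (l-1) * SG n Γ σ l → l ≤ k

noncomputable def qval (n : ℕ) (v B Γ : Fin n → ℝ) (σ : Equiv.Perm (Fin n)) (k : ℕ) : ℝ :=
  if sortedVal n v σ k * SG n Γ σ k < SB n B σ k then SB n B σ k / SG n Γ σ k
  else sortedVal n v σ k

noncomputable def allocAtPos (n : ℕ) (v B Γ : Fin n → ℝ) (σ : Equiv.Perm (Fin n))
    (k : ℕ) (j : Fin n) : ℝ :=
  if (j : ℕ) < k then B (σ j) / qval n v B Γ σ k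
  else if (j : ℕ) = k then SG n Γ σ (k+1) - SB n B σ k / qval n v B Γ σ k
  else -Γ (σ j)

def DPMAlloc (n : ℕ) (v B Γ : Fin n → ℝ) (x : Fin n → ℝ) : Prop :=
  ∃ σ : Equiv.Perm (Fin n), (∀ a b : Fin n, a ≤ b → v (σ b) ≤ v (σ a)) ∧
    ∃ k : ℕ, IsPartitionPoint n v B Γ σ k ∧
      ∀ a : Fin n, x a = allocAtPos n v B Γ σ k (σ.symm a)

/-- In the Differential Pricing Mechanism, `(v_i − λ_i)·x_i(v_i) ≥ 0`; equivalently
`v_i·x_i(v_i) − p_i(v_i) ≥ 0`, with Myerson payment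
`p_i(v_i) = v_i·x_i(v_i) − ∫_{v̂}^{v_i} x_i(z, v_{−i}) dz`, where `v̂` is the
zero-crossing point of the allocation curve `z ↦ x_i(z, v_{−i})`. -/
theorem stmt_6 (n : ℕ) (v B Γ : Fin n → ℝ)
    (hv : ∀ i, 0 ≤ v i) (hB : ∀ i, 0 < B i) (hΓ : ∀ i, 0 ≤ Γ i)
    (A : Fin n → ℝ → ℝ)
    (hA : ∀ (i : Fin n) (z : ℝ), 0 ≤ z → ∃ xfull : Fin n → ℝ,
      DPMAlloc n (Function.update v i z) B Γ xfull ∧ A i z = xfull i)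
    (vhat : Fin n → ℝ) (hvhat0 : ∀ i, 0 ≤ vhat i)
    (hcross : ∀ (i : Fin n) (δ : ℝ), 0 < δ →
      A i (vhat i - δ) ≤ 0 ∧ 0 ≤ A i (vhat i + δ))
    (p : Fin n → ℝ)
    (hp : ∀ i, p i = v i * A i (v i) - ∫ z in (vhat i)..(v i), A i z) :
    ∀ i : Fin n, 0 ≤ v i * A i (v i) - p i ∧
      (A i (v i) ≠ 0 → 0 ≤ (v i - p i / A i (v i)) * A i (v i)) := by
  intro i
  have hint : 0 ≤ ∫ z in (vhat i)..(v i), A i z := by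
    rcases le_total (vhat i) (v i) with h | h
    · rw [intervalIntegral.integral_of_le h]
      apply MeasureTheory.setIntegral_nonneg measurableSet_Ioc
      intro z hz
      have : 0 < z - vhat i := by
        have := hz.1; linarith
      have := (hcross i (z - vhat i) this).2
      simpa using this
    · rw [intervalIntegral.integral_symm (v i) (vhat i), intervalIntegral.integral_of_le h,
        MeasureTheory.integral_Ioc_eq_integral_Ioo]
      have : (∫ z in Set.Ioo (v i) (vhat i), A i z) ≤ 0 := by
        apply MeasureTheory.setIntegral_nonpos measurableSet_Ioo
        intro z hz
        have hδ : 0 < vhat i - z := by have := hz.2; linarith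
        have := (hcross i (vhat i - z) hδ).1
        simpa using this
      linarith
  have h1 : 0 ≤ v i * A i (v i) - p i := by rw [hp i]; linarith
  refine ⟨h1, fun hA0 => ?_⟩
  have : (v i - p i / A i (v i)) * A i (v i) = v i * A i (v i) - p i := by
    field_simp
  rw [this]; exact h1
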